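/- Let 0 < ρ ≤ 1/2, let k ≥ 1, N ≥ 1, T ≥ 1 be integers, and let P be a random k×N matrix over F₂ with i.i.d. Bernoulli(ρ) entries. Then for every u ∈ F₂^k with Hamming weight W_H(u) ≥ T and every v ∈ F₂^N: Pr{uP = v} ≤ Pr{uP = 0} = (1 - ρ_{W_H(u)})^N ≤ (1 - ρ_T)^N = ((1 + (1-2ρ)^T)/2)^N, where ρ_w = (1-(1-2ρ)^w)/2. -/

import Mathlib

open Matrix

open Finset

namespace Stmt4Aux

noncomputable def χ (x : ZMod 2) : ℝ := if x = 0 then 1 else -1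

lemma zmod2_cases (x : ZMod 2) : x = 0 ∨ x = 1 := by revert x; decide

lemma χ_zero : χ 0 = 1 := by simp [χ]

lemma χ_add (a b : ZMod 2) : χ (a + b) = χ a * χ b := by
  rcases zmod2_cases a with ha | ha <;> rcases zmod2_cases b with hb | hb <;>
    subst ha <;> subst hb <;> norm_num [χ] <;> decide

lemma χ_sum {ι : Type*} (s : Finset ι) (g : ι → ZMod 2) :
    χ (∑ i ∈ s, g i) = ∏ i ∈ s, χ (g i) := by
  induction s using Finset.cons_induction with
  | empty => simp [χ_zero]
  | cons a s ha ih => simp [Finset.sum_cons, Finset.prod_cons, χ_add, ih]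

lemma indicator_eq (x b : ZMod 2) :
    (if x = b then (1:ℝ) else 0) = (1 + χ b * χ x) / 2 := by
  rcases zmod2_cases x with hx | hx <;> rcases zmod2_cases b with hb | hb <;>
    subst hx <;> subst hb <;> norm_num [χ]

lemma sum_zmod2 (g : ZMod 2 → ℝ) : ∑ x : ZMod 2, g x = g 0 + g 1 := by
  have : (Finset.univ : Finset (ZMod 2)) = {0, 1} := by decide
  rw [this, Finset.sum_insert (by decide), Finset.sum_singleton]

lemma prod_ite_zero {ι : Type*} [Fintype ι] (p : ι → Prop) [DecidablePred p]
    [Decidable (∀ i, p i)] (f : ι → ℝ) :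
    (∏ i, if p i then f i else 0) = if (∀ i, p i) then ∏ i, f i else 0 := by
  by_cases h : ∀ i, p i
  · rw [if_pos h]; exact Finset.prod_congr rfl fun i _ => if_pos (h i)
  · rw [if_neg h]; push_neg at h; obtain ⟨i, hi⟩ := h
    exact Finset.prod_eq_zero (Finset.mem_univ i) (if_neg hi)

end Stmt4Aux

namespace Stmt4Aux

lemma colS (ρ : ℝ) {k : ℕ} (u : Fin k → ZMod 2) (b : ZMod 2) :
    (∑ c : Fin k → ZMod 2,
        if (∑ i, u i * c i) = b then ∏ i, (if c i = 1 then ρ else 1 - ρ) else 0)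
    = (1 + χ b * (1 - 2 * ρ) ^ hammingNorm u) / 2 := by
  have hg1 : ∑ x : ZMod 2, (if x = 1 then ρ else 1 - ρ) = 1 := by
    rw [sum_zmod2]; norm_num
  have key1 : ∑ c : Fin k → ZMod 2, ∏ i, (if c i = 1 then ρ else 1 - ρ) = 1 := by
    rw [← Fintype.prod_sum (f := fun (_ : Fin k) (x : ZMod 2) => if x = 1 then ρ else 1 - ρ)]
    simp [hg1]
  have key2 : ∑ c : Fin k → ZMod 2,
      ∏ i, (χ (u i * c i) * (if c i = 1 then ρ else 1 - ρ))
      = (1 - 2 * ρ) ^ hammingNorm u := by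
    rw [← Fintype.prod_sum (f := fun (i : Fin k) (x : ZMod 2) =>
      χ (u i * x) * (if x = 1 then ρ else 1 - ρ))]
    have h : ∀ i, (∑ x : ZMod 2, χ (u i * x) * (if x = 1 then ρ else 1 - ρ))
        = if u i = 0 then 1 else 1 - 2 * ρ := by
      intro i
      rcases zmod2_cases (u i) with h | h <;> rw [h] <;> rw [sum_zmod2] <;>
        norm_num [χ] <;> ring
    rw [Finset.prod_congr rfl fun i _ => h i, Finset.prod_ite, Finset.prod_const,
      Finset.prod_const, one_pow, one_mul, hammingNorm]
  have step : ∀ c : Fin k → ZMod 2,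
      (if (∑ i, u i * c i) = b then ∏ i, (if c i = 1 then ρ else 1 - ρ) else 0)
      = (∏ i, (if c i = 1 then ρ else 1 - ρ)) / 2
        + (χ b / 2) * ∏ i, (χ (u i * c i) * (if c i = 1 then ρ else 1 - ρ)) := by
    intro c
    have h0 : (if (∑ i, u i * c i) = b then ∏ i, (if c i = 1 then ρ else 1 - ρ) else 0)
        = (if (∑ i, u i * c i) = b then (1:ℝ) else 0)
          * ∏ i, (if c i = 1 then ρ else 1 - ρ) := by
      by_cases h : (∑ i, u i * c i) = b <;> simp [h]
    rw [h0, indicator_eq, χ_sum, Finset.prod_mul_distrib]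
    ring
  simp only [step]
  rw [Finset.sum_add_distrib, ← Finset.sum_div, key1, ← Finset.mul_sum, key2]
  ring

lemma factorize (ρ : ℝ) {k N : ℕ} (u : Fin k → ZMod 2) (v : Fin N → ZMod 2) :
    (∑ P : Matrix (Fin k) (Fin N) (ZMod 2),
        if Matrix.vecMul u P = v then
          ∏ i : Fin k, ∏ j : Fin N, (if P i j = 1 then ρ else 1 - ρ) else 0)
    = ∏ j : Fin N, ∑ c : Fin k → ZMod 2,
        if (∑ i, u i * c i) = v j then ∏ i, (if c i = 1 then ρ else 1 - ρ) else 0 := by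
  rw [Fintype.prod_sum (f := fun (j : Fin N) (c : Fin k → ZMod 2) =>
    if (∑ i, u i * c i) = v j then ∏ i, (if c i = 1 then ρ else 1 - ρ) else 0)]
  refine Fintype.sum_equiv
    ⟨fun P j i => P i j, fun x i j => x j i, fun P => rfl, fun x => rfl⟩ _ _ (fun P => ?_)
  show _ = ∏ j : Fin N, if (∑ i, u i * P i j) = v j then ∏ i, (if P i j = 1 then ρ else 1 - ρ) else 0
  have hcond : (Matrix.vecMul u P = v) ↔ ∀ j, (∑ i, u i * P i j) = v j := by
    rw [funext_iff]
    exact Iff.rfl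
  rw [prod_ite_zero (p := fun j => (∑ i, u i * P i j) = v j)
    (f := fun j => ∏ i, (if P i j = 1 then ρ else 1 - ρ))]
  exact if_congr hcond Finset.prod_comm rfl

end Stmt4Aux


open Stmt4Aux in
/-- Let `0 < ρ ≤ 1/2`, `k, N, T ≥ 1` integers, and let `P` be a random `k×N`
matrix over `F₂` with i.i.d. Bernoulli(ρ) entries. Then for every `u ∈ F₂^k` with
`W_H(u) ≥ T` and every `v ∈ F₂^N`:
`Pr{uP = v} ≤ Pr{uP = 0} = (1 - ρ_{W_H(u)})^N ≤ (1 - ρ_T)^N = ((1 + (1-2ρ)^T)/2)^N`,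
where `ρ_w = (1-(1-2ρ)^w)/2`. Probabilities are expressed as sums of product Bernoulli(ρ)
weights over the matrices realizing the events. -/
theorem stmt_4 (ρ : ℝ) (hρ0 : 0 < ρ) (hρ1 : ρ ≤ 1 / 2) (k N T : ℕ)
    (hk : 1 ≤ k) (hN : 1 ≤ N) (hT : 1 ≤ T)
    (u : Fin k → ZMod 2) (hu : T ≤ hammingNorm u) (v : Fin N → ZMod 2) :
    (∑ P : Matrix (Fin k) (Fin N) (ZMod 2),
        (if Matrix.vecMul u P = v then
          ∏ i : Fin k, ∏ j : Fin N, (if P i j = 1 then ρ else 1 - ρ) else 0))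
      ≤ (∑ P : Matrix (Fin k) (Fin N) (ZMod 2),
          (if Matrix.vecMul u P = 0 then
            ∏ i : Fin k, ∏ j : Fin N, (if P i j = 1 then ρ else 1 - ρ) else 0))
    ∧ (∑ P : Matrix (Fin k) (Fin N) (ZMod 2),
          (if Matrix.vecMul u P = 0 then
            ∏ i : Fin k, ∏ j : Fin N, (if P i j = 1 then ρ else 1 - ρ) else 0))
        = (1 - (1 - (1 - 2 * ρ) ^ (hammingNorm u)) / 2) ^ N
    ∧ (1 - (1 - (1 - 2 * ρ) ^ (hammingNorm u)) / 2) ^ N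
        ≤ (1 - (1 - (1 - 2 * ρ) ^ T) / 2) ^ N
    ∧ (1 - (1 - (1 - 2 * ρ) ^ T) / 2) ^ N = ((1 + (1 - 2 * ρ) ^ T) / 2) ^ N := by
  have hs0 : (0:ℝ) ≤ 1 - 2 * ρ := by linarith
  have hs1 : (1:ℝ) - 2 * ρ ≤ 1 := by linarith
  set w := hammingNorm u with hw
  have hw0 : (0:ℝ) ≤ (1 - 2 * ρ) ^ w := pow_nonneg hs0 w
  have hw1 : (1 - 2 * ρ) ^ w ≤ 1 := pow_le_one₀ hs0 hs1
  have hχ : ∀ b : ZMod 2, χ b = 1 ∨ χ b = -1 := by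
    intro b; rcases zmod2_cases b with h | h <;> subst h <;> simp [χ] <;> decide
  have hS0 : ∀ b : ZMod 2, 0 ≤ (1 + χ b * (1 - 2 * ρ) ^ w) / 2 := by
    intro b; rcases hχ b with h | h <;> rw [h] <;> nlinarith
  have hSle : ∀ b : ZMod 2,
      (1 + χ b * (1 - 2 * ρ) ^ w) / 2 ≤ (1 + χ 0 * (1 - 2 * ρ) ^ w) / 2 := by
    intro b; rcases hχ b with h | h <;> rw [h, χ_zero] <;> nlinarith
  rw [factorize ρ u v, factorize ρ u 0]
  simp only [colS ρ u, Pi.zero_apply, χ_zero, ← hw]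
  refine ⟨?_, ?_, ?_, ?_⟩
  · exact Finset.prod_le_prod (fun j _ => hS0 (v j)) (fun j _ => by
      simpa [χ_zero] using hSle (v j))
  · rw [Finset.prod_const, Finset.card_univ, Fintype.card_fin]
    congr 1; ring
  · have hle : (1 - 2 * ρ) ^ w ≤ (1 - 2 * ρ) ^ T := pow_le_pow_of_le_one hs0 hs1 hu
    have hT0 : (0:ℝ) ≤ (1 - 2 * ρ) ^ T := pow_nonneg hs0 T
    exact pow_le_pow_left₀ (by nlinarith) (by linarith) N
  · congr 1; ring
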